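/- Let p be a prime, q = p^d, and let G ≤ AΓL(1,q) act 2-transitively on F_q. Let s be the smallest positive integer such that t(a,s) ∈ G_0 for some a ∈ F_q^×, and m the smallest positive integer such that t(1,ms) ∈ G_0. Then: (a) if m = 1, then G_0 is the group generated by {t(a,0) : a ∈ F_q^×} together with t(1,s); conversely, if G_0 contains {t(a,0) : a ∈ F_q^×}, then m = 1; (b) if m > 1, then the multiplicative order of p^s modulo m(p^s − 1) equals m, and every prime divisor of m divides p^s − 1. -/

import Mathlib

/-- `scalarFrob G p a k` says that the map t(a,k) : z ↦ a·z^{p^k} belongs to G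
(as a permutation of the field; such a map automatically fixes 0). -/
def scalarFrob {F : Type*} [Field F] (G : Subgroup (Equiv.Perm F)) (p : ℕ)
    (a : F) (k : ℕ) : Prop :=
  ∃ g ∈ G, ∀ z : F, g z = a * z ^ p ^ k

namespace Stmt11Aux

def gS (e : ℕ) : ℕ → ℕ
  | 0 => 0
  | k+1 => 1 + gS e k * e

lemma gS_geom (e : ℕ) (he : 1 ≤ e) (k : ℕ) : (e-1) * gS e k + 1 = e ^ k := by
  induction k with
  | zero => simp [gS]
  | succ n ih =>
    obtain ⟨f, rfl⟩ : ∃ f, e = f + 1 := ⟨e - 1, by omega⟩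
    show (f + 1 - 1) * (1 + gS (f+1) n * (f+1)) + 1 = (f+1) ^ (n+1)
    rw [pow_succ, ← ih]
    simp only [Nat.add_sub_cancel]
    ring

lemma gS_add (e i l : ℕ) : gS e (i + l) = gS e l + e ^ l * gS e i := by
  induction l with
  | zero => simp [gS]
  | succ n ih =>
    show gS e ((i + n) + 1) = (1 + gS e n * e) + e ^ (n+1) * gS e i
    show 1 + gS e (i + n) * e = _
    rw [ih, pow_succ]
    ring

lemma compl_add_mod {d : ℕ} (hd : 0 < d) (x y : ℕ) :
    ((d - x % d) + (x + y)) % d = y % d := by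
  have h1 : x % d < d := Nat.mod_lt _ hd
  have h2 : x ≡ x % d [MOD d] := (Nat.mod_modEq x d).symm
  have h3 : (d - x % d) + (x + y) ≡ (d - x % d) + (x % d + y) [MOD d] :=
    Nat.ModEq.add_left _ (Nat.ModEq.add_right y h2)
  have h4 : (d - x % d) + (x % d + y) = d + y := by omega
  have h5 : d + y ≡ y [MOD d] := by
    simpa using (Nat.ModEq.add_right y (Nat.modEq_zero_iff_dvd.2 ⟨1, (mul_one d).symm⟩))
  exact h3.trans (h4 ▸ h5)

section Field

variable {F : Type*} [Field F] [Fintype F] {p d : ℕ} {G : Subgroup (Equiv.Perm F)}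

lemma pow_card' (hcard : Fintype.card F = p ^ d) (z : F) : z ^ p ^ d = z := by
  rw [← hcard]; exact FiniteField.pow_card z

lemma pow_add_d (hcard : Fintype.card F = p ^ d) (z : F) (r t : ℕ) :
    z ^ p ^ (r + d * t) = z ^ p ^ r := by
  induction t with
  | zero => simp
  | succ n ih =>
    have h : r + d * (n+1) = (r + d * n) + d := by ring
    rw [h, pow_add, pow_mul, pow_card' hcard, ih]

lemma pow_mod (hcard : Fintype.card F = p ^ d) (z : F) (j : ℕ) :
    z ^ p ^ j = z ^ p ^ (j % d) := by
  conv_lhs => rw [← Nat.mod_add_div j d]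
  exact pow_add_d hcard z (j % d) (j / d)

lemma pow_p_dvd (hcard : Fintype.card F = p ^ d) (z : F) {n : ℕ} (hn : n % d = 0) :
    z ^ p ^ n = z := by
  rw [pow_mod hcard, hn, pow_zero, pow_one]

lemma sf_id : scalarFrob G p 1 0 :=
  ⟨1, G.one_mem, fun z => by simp⟩

lemma sf_one_d (hcard : Fintype.card F = p ^ d) : scalarFrob G p 1 d :=
  ⟨1, G.one_mem, fun z => by simp [pow_card' hcard]⟩

lemma sf_comp {a b : F} {j k : ℕ} (h1 : scalarFrob G p a j) (h2 : scalarFrob G p b k) :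
    scalarFrob G p (b * a ^ p ^ k) (j + k) := by
  obtain ⟨g, hg, hga⟩ := h1
  obtain ⟨h, hh, hhb⟩ := h2
  refine ⟨h * g, G.mul_mem hh hg, fun z => ?_⟩
  rw [Equiv.Perm.mul_apply, hhb, hga, mul_pow, ← pow_mul, ← pow_add, mul_assoc]

lemma sf_mod (hcard : Fintype.card F = p ^ d) {a : F} {j : ℕ} (h : scalarFrob G p a j) :
    scalarFrob G p a (j % d) := by
  obtain ⟨g, hg, hga⟩ := h
  exact ⟨g, hg, fun z => (hga z).trans (by rw [pow_mod hcard])⟩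

lemma sf_inv (hcard : Fintype.card F = p ^ d) {a : F} {j : ℕ} (ha : a ≠ 0)
    (j' : ℕ) (hj' : (j + j') % d = 0) (h : scalarFrob G p a j) :
    scalarFrob G p (a⁻¹ ^ p ^ j') j' := by
  obtain ⟨g, hg, hga⟩ := h
  refine ⟨g⁻¹, G.inv_mem hg, fun w => ?_⟩
  have key : ∀ z : F, a⁻¹ ^ p ^ j' * (g z) ^ p ^ j' = z := by
    intro z
    rw [hga, mul_pow, ← mul_assoc, ← mul_pow, inv_mul_cancel₀ ha, one_pow, one_mul,
      ← pow_mul, ← pow_add, pow_p_dvd hcard _ hj']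
  have h2 := key (g⁻¹ w)
  rw [← Equiv.Perm.mul_apply, mul_inv_cancel, Equiv.Perm.one_apply] at h2
  exact h2.symm

lemma sfA {s : ℕ} {a₀ : F} (hA : scalarFrob G p a₀ s) :
    ∀ k, scalarFrob G p (a₀ ^ gS (p^s) k) (k * s)
  | 0 => by simpa [gS] using (sf_id : scalarFrob G p (1:F) 0)
  | (k+1) => by
      have h := sf_comp (sfA hA k) hA
      have e1 : a₀ * (a₀ ^ gS (p^s) k) ^ p ^ s = a₀ ^ gS (p^s) (k+1) := by
        rw [← pow_mul]
        show _ = a₀ ^ (1 + gS (p^s) k * p^s)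
        rw [pow_add, pow_one]
      have e2 : k * s + s = (k+1) * s := by ring
      rwa [e1, e2] at h

lemma stab_form (hp : p.Prime)
    (hAGL : ∀ g ∈ G, ∃ (a c : F) (k : ℕ), ∀ z : F, g z = a * z ^ p ^ k + c)
    {g : Equiv.Perm F} (hg : g ∈ G) (hg0 : g 0 = 0) :
    ∃ b : F, b ≠ 0 ∧ ∃ j, ∀ z : F, g z = b * z ^ p ^ j := by
  obtain ⟨a, c, k, h⟩ := hAGL g hg
  have h0 := h 0
  rw [hg0, zero_pow (pow_pos hp.pos k).ne', mul_zero, zero_add] at h0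
  have hz : ∀ z : F, g z = a * z ^ p ^ k := fun z => by rw [h z, ← h0, add_zero]
  have h1 : g 1 = a := by rw [hz 1, one_pow, mul_one]
  have ha : a ≠ 0 := by
    rw [← h1]
    intro hcon
    exact one_ne_zero (g.injective (hcon.trans hg0.symm))
  exact ⟨a, ha, k, hz⟩

lemma trans0 (hp : p.Prime)
    (hAGL : ∀ g ∈ G, ∃ (a c : F) (k : ℕ), ∀ z : F, g z = a * z ^ p ^ k + c)
    (h2trans : ∀ x y x' y' : F, x ≠ y → x' ≠ y' → ∃ g ∈ G, g x = x' ∧ g y = y')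
    {x : F} (hx : x ≠ 0) : ∃ j, scalarFrob G p x j := by
  obtain ⟨g, hg, h0, h1⟩ := h2trans 0 1 0 x zero_ne_one (Ne.symm hx)
  obtain ⟨b, hb, j, hf⟩ := stab_form hp hAGL hg h0
  have hbx : b = x := by
    have := hf 1
    rw [one_pow, mul_one] at this
    rw [← h1, this]
  exact ⟨j, hbx ▸ ⟨g, hg, hf⟩⟩

lemma s_dvd (hd : 0 < d) (hcard : Fintype.card F = p ^ d) {s : ℕ}
    (hs : IsLeast {k | 0 < k ∧ ∃ a : F, a ≠ 0 ∧ scalarFrob G p a k} s)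
    {b : F} {j : ℕ} (hb : b ≠ 0) (h : scalarFrob G p b j) : s ∣ j := by
  obtain ⟨a₀, ha₀, hA⟩ := hs.1.2
  have hsd : s ≤ d := hs.2 ⟨hd, 1, one_ne_zero, sf_one_d hcard⟩
  set k := j / s with hk
  set r := j % s with hr
  have hjkr : k * s + r = j := by rw [hk, hr, mul_comm]; exact Nat.div_add_mod j s
  set j₂ := d - (k * s) % d with hj₂
  have h0 : (k * s + j₂) % d = 0 := by
    have h' := compl_add_mod hd (k * s) 0
    rw [add_zero] at h'
    rw [Nat.add_comm]
    simpa using h'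
  have hAk := sfA hA k
  have hinv := sf_inv hcard (pow_ne_zero _ ha₀) j₂ h0 hAk
  have hcomp := sf_comp hinv h
  have hmod := sf_mod hcard hcomp
  have hexp : (j₂ + j) % d = r := by
    have h' := compl_add_mod hd (k * s) r
    rw [hjkr] at h'
    rw [h', Nat.mod_eq_of_lt (lt_of_lt_of_le (Nat.mod_lt j (hs.1.1)) hsd)]
  rw [hexp] at hmod
  by_contra hns
  have hrpos : 0 < r := Nat.pos_of_ne_zero (fun h'' => hns (Nat.dvd_of_mod_eq_zero h''))
  have hle : s ≤ r := hs.2 ⟨hrpos, _, mul_ne_zero hb (pow_ne_zero _ (pow_ne_zero _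
    (inv_ne_zero (pow_ne_zero _ ha₀)))), hmod⟩
  exact absurd (Nat.mod_lt j hs.1.1) (not_lt.2 (hle.trans (le_of_eq hr.symm)))


def Nsub (G : Subgroup (Equiv.Perm F)) (p d : ℕ) (hcard : Fintype.card F = p ^ d) :
    Subgroup Fˣ where
  carrier := {x | scalarFrob G p (x : F) 0}
  one_mem' := by simpa using (sf_id : scalarFrob G p (1:F) 0)
  mul_mem' := by
    intro x y hx hy
    have h := sf_comp hx hy
    simpa [Units.val_mul, mul_comm] using h
  inv_mem' := by
    intro x hx
    have h := sf_inv hcard (Units.ne_zero x) 0 (by simp) hx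
    simpa using h

lemma mem_Nsub {hcard : Fintype.card F = p ^ d} {x : Fˣ} :
    x ∈ Nsub G p d hcard ↔ scalarFrob G p (x : F) 0 := Iff.rfl

lemma coset (hd : 0 < d) (hcard : Fintype.card F = p ^ d) {s : ℕ} {a₀ : F} (ha₀ : a₀ ≠ 0)
    (hA : scalarFrob G p a₀ s) (b : Fˣ) (k : ℕ) (hb : scalarFrob G p (b : F) (k * s)) :
    (QuotientGroup.mk b : Fˣ ⧸ Nsub G p d hcard) =
      (QuotientGroup.mk (Units.mk0 a₀ ha₀) : Fˣ ⧸ Nsub G p d hcard) ^ gS (p ^ s) k := by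
  set u : Fˣ := Units.mk0 a₀ ha₀ with hu
  set Sk := gS (p ^ s) k with hSk
  set j₂ := d - (k * s) % d with hj₂
  have h0 : (k * s + j₂) % d = 0 := by
    have h' := compl_add_mod hd (k * s) 0
    rw [add_zero] at h'
    rw [Nat.add_comm]
    simpa using h'
  have hAk := sfA hA k
  have hinv := sf_inv hcard (pow_ne_zero _ ha₀) j₂ h0 hAk
  have hcomp := sf_comp hinv hb
  have hscal : ((a₀ ^ Sk)⁻¹ ^ p ^ j₂) ^ p ^ (k * s) = (a₀ ^ Sk)⁻¹ := by
    rw [← pow_mul, ← pow_add]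
    exact pow_p_dvd hcard _ (by rw [Nat.add_comm]; exact h0)
  rw [hscal] at hcomp
  have hmod := sf_mod hcard hcomp
  rw [Nat.add_comm, h0] at hmod
  have hval : (b : F) * (a₀ ^ Sk)⁻¹ = ((b * (u ^ Sk)⁻¹ : Fˣ) : F) := by
    simp [hu]
  rw [hval] at hmod
  have hmem : b * (u ^ Sk)⁻¹ ∈ Nsub G p d hcard := hmod
  have := (QuotientGroup.eq_one_iff _).2 hmem
  rw [QuotientGroup.mk_mul, QuotientGroup.mk_inv, mul_inv_eq_one] at this
  rw [this, QuotientGroup.mk_pow]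

lemma sf_one_iff (hd : 0 < d) (hcard : Fintype.card F = p ^ d) {s : ℕ} {a₀ : F}
    (ha₀ : a₀ ≠ 0) (hA : scalarFrob G p a₀ s) (k : ℕ) :
    scalarFrob G p (1 : F) (k * s) ↔
      (QuotientGroup.mk (Units.mk0 a₀ ha₀) : Fˣ ⧸ Nsub G p d hcard) ^ gS (p ^ s) k = 1 := by
  constructor
  · intro h
    have hc := coset hd hcard ha₀ hA 1 k (by simpa using h)
    rw [QuotientGroup.mk_one] at hc
    exact hc.symm
  · intro h
    set u : Fˣ := Units.mk0 a₀ ha₀ with hu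
    have hmem : u ^ gS (p ^ s) k ∈ Nsub G p d hcard := by
      rw [← QuotientGroup.eq_one_iff, QuotientGroup.mk_pow]
      exact h
    have hinv : (u ^ gS (p ^ s) k)⁻¹ ∈ Nsub G p d hcard := (Nsub G p d hcard).inv_mem hmem
    have hsf : scalarFrob G p ((a₀ ^ gS (p ^ s) k)⁻¹) 0 := by
      have := (mem_Nsub).1 hinv
      simpa [hu] using this
    have hcomp := sf_comp (sfA hA k) hsf
    have : (a₀ ^ gS (p ^ s) k)⁻¹ * (a₀ ^ gS (p ^ s) k) ^ p ^ 0 = 1 := by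
      rw [pow_zero, pow_one, inv_mul_cancel₀ (pow_ne_zero _ ha₀)]
    rwa [this, add_zero] at hcomp

end Field

end Stmt11Aux


lemma pow_eq_pow_modEq {Qt : Type*} [Group Qt] {x : Qt} {a b : ℕ} (h : x ^ a = x ^ b) :
    a ≡ b [MOD orderOf x] := by
  rcases le_total a b with hab | hab
  · have h1 : x ^ a * x ^ (b - a) = x ^ a * 1 := by
      rw [mul_one, ← pow_add, Nat.add_sub_cancel' hab, h]
    have h2 : x ^ (b - a) = 1 := mul_left_cancel h1
    exact (Nat.modEq_iff_dvd' hab).2 (orderOf_dvd_of_pow_eq_one h2)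
  · have h1 : x ^ b * x ^ (a - b) = x ^ b * 1 := by
      rw [mul_one, ← pow_add, Nat.add_sub_cancel' hab, h.symm]
    have h2 : x ^ (a - b) = 1 := mul_left_cancel h1
    exact ((Nat.modEq_iff_dvd' hab).2 (orderOf_dvd_of_pow_eq_one h2)).symm

open Stmt11Aux in
set_option maxHeartbeats 1000000 in
/-- Lemma 3.8: let G ≤ AΓL(1,q) be 2-transitive on F_q, q = p^d, s the smallest positive
integer with t(a,s) ∈ G₀ for some a ∈ F_q^×, and m the smallest positive integer with
t(1,ms) ∈ G₀. (a) If m = 1 then G₀ is the group generated by GL(1,q) and t(1,s)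
(i.e. G₀ = {z ↦ a z^{p^{ks}} : a ∈ F_q^×, k ≥ 0}); conversely if G₀ ⊇ GL(1,q) then m = 1.
(b) If m > 1 then p^s has order m (mod m(p^s-1)) and S(m) ⊆ S(p^s-1). -/
theorem stmt_11 {F : Type*} [Field F] [Fintype F] (p d : ℕ) (hp : p.Prime) (hd : 0 < d)
    (hcard : Fintype.card F = p ^ d)
    (G : Subgroup (Equiv.Perm F))
    (hAGL : ∀ g ∈ G, ∃ (a c : F) (k : ℕ), ∀ z : F, g z = a * z ^ p ^ k + c)
    (h2trans : ∀ x y x' y' : F, x ≠ y → x' ≠ y' → ∃ g ∈ G, g x = x' ∧ g y = y')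
    (s : ℕ) (hs : IsLeast {k | 0 < k ∧ ∃ a : F, a ≠ 0 ∧ scalarFrob G p a k} s)
    (m : ℕ) (hm : IsLeast {k | 0 < k ∧ scalarFrob G p 1 (k * s)} m) :
    (m = 1 → ∀ g : Equiv.Perm F, (g ∈ G ∧ g 0 = 0) ↔
        ∃ (a : F) (k : ℕ), a ≠ 0 ∧ ∀ z : F, g z = a * z ^ p ^ (k * s)) ∧
    ((∀ a : F, a ≠ 0 → scalarFrob G p a 0) → m = 1) ∧
    (1 < m → orderOf ((p ^ s : ℕ) : ZMod (m * (p ^ s - 1))) = m ∧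
        ∀ r : ℕ, r.Prime → r ∣ m → r ∣ p ^ s - 1) := by
  classical
  obtain ⟨a₀, ha₀, hA⟩ := hs.1.2
  have hspos : 0 < s := hs.1.1
  have hmpos : 0 < m := hm.1.1
  set e := p ^ s with he
  have he2 : 2 ≤ e := le_trans hp.two_le (Nat.le_self_pow hspos.ne' p)
  set N : Subgroup Fˣ := Nsub G p d hcard with hN
  set u : Fˣ := Units.mk0 a₀ ha₀ with hu
  set ub : Fˣ ⧸ N := QuotientGroup.mk u with hub
  haveI hfinQ : Finite (Fˣ ⧸ N) := Quotient.finite _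
  have hK : ∀ k, scalarFrob G p (1 : F) (k * s) ↔ ub ^ gS e k = 1 :=
    fun k => sf_one_iff hd hcard ha₀ hA k
  have h1 : ub ^ gS e m = 1 := (hK m).1 hm.1.2
  have h2 : ∀ k, 0 < k → k < m → ub ^ gS e k ≠ 1 := by
    intro k hk hkm hcon
    exact absurd (hm.2 ⟨hk, (hK k).2 hcon⟩) (not_le.2 hkm)
  have hper : ∀ k, ub ^ gS e (k + m) = ub ^ gS e k := by
    intro k
    induction k with
    | zero => simpa [gS] using h1
    | succ n ih =>
      have hx : (n+1) + m = (n + m) + 1 := by ring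
      rw [hx]
      show ub ^ (1 + gS e (n+m) * e) = ub ^ (1 + gS e n * e)
      rw [pow_add, pow_add, pow_mul, pow_mul, ih]
  have hperm : ∀ t k, ub ^ gS e (k + t * m) = ub ^ gS e k := by
    intro t
    induction t with
    | zero => intro k; simp
    | succ n ih =>
      intro k
      have hx : k + (n+1) * m = (k + n * m) + m := by ring
      rw [hx, hper, ih]
  have hmodm : ∀ k, ub ^ gS e k = ub ^ gS e (k % m) := by
    intro k
    conv_lhs => rw [← Nat.mod_add_div' k m]
    exact hperm (k / m) (k % m)
  have hsurj : ∀ x : Fˣ ⧸ N, ∃ k, ub ^ gS e k = x := by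
    intro x
    obtain ⟨xu, rfl⟩ := QuotientGroup.mk_surjective x
    obtain ⟨j, hj⟩ := trans0 hp hAGL h2trans (Units.ne_zero xu)
    obtain ⟨k, hk⟩ := s_dvd hd hcard hs (Units.ne_zero xu) hj
    refine ⟨k, (coset hd hcard ha₀ hA xu k ?_).symm⟩
    rw [mul_comm k s, ← hk]
    exact hj
  have hexpall : ∀ x : Fˣ ⧸ N, x ^ (p ^ d - 1) = 1 := by
    intro x
    obtain ⟨w, rfl⟩ := QuotientGroup.mk_surjective x
    rw [← QuotientGroup.mk_pow]
    have hw : w ^ (p ^ d - 1) = 1 := by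
      have hcu : Fintype.card Fˣ = p ^ d - 1 := by rw [Fintype.card_units, hcard]
      rw [← hcu]; exact pow_card_eq_one
    rw [hw, QuotientGroup.mk_one]
  have hcop : Nat.Coprime p (p ^ d - 1) := by
    rw [Nat.Prime.coprime_iff_not_dvd hp]
    intro hdvd
    have hpd : p ∣ p ^ d := dvd_pow_self p hd.ne'
    have h1pd : 1 ≤ p ^ d := Nat.one_le_pow _ _ hp.pos
    have : p ∣ 1 := by
      have := Nat.dvd_sub hpd hdvd
      rwa [show p ^ d - (p ^ d - 1) = 1 by omega] at this
    exact absurd (Nat.dvd_one.mp this) hp.one_lt.ne'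
  have haux : ∀ i j : ℕ, i ≤ j → j < m → ub ^ gS e i = ub ^ gS e j → i = j := by
    intro i j hij hjm heq
    by_contra hne
    have hlt : i < j := lt_of_le_of_ne hij hne
    have hdecomp : gS e j = gS e i + gS e (j - i) * e ^ i := by
      have hg := gS_add e (j - i) i
      rw [Nat.sub_add_cancel hij] at hg
      rw [hg]; ring
    rw [hdecomp, pow_add, pow_mul] at heq
    have hy : (ub ^ gS e (j - i)) ^ e ^ i = 1 := (left_eq_mul.1 heq).symm ▸ rfl
    have hdvd1 : orderOf ((ub ^ gS e (j - i))) ∣ e ^ i := orderOf_dvd_of_pow_eq_one hy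
    have hdvd2 : orderOf ((ub ^ gS e (j - i))) ∣ p ^ d - 1 :=
      orderOf_dvd_of_pow_eq_one (hexpall _)
    have hcop2 : Nat.Coprime (e ^ i) (p ^ d - 1) := by
      rw [he]; exact Nat.Coprime.pow_left i (Nat.Coprime.pow_left s hcop)
    have hone : orderOf ((ub ^ gS e (j - i))) = 1 := by
      have hg := Nat.dvd_gcd hdvd1 hdvd2
      have hgeq : Nat.gcd (e ^ i) (p ^ d - 1) = 1 := hcop2
      rw [hgeq] at hg
      exact Nat.dvd_one.mp hg
    exact h2 (j - i) (by omega) (by omega) (orderOf_eq_one_iff.mp hone)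
  have le1 : m ≤ orderOf ub := by
    have hinj : Function.Injective
        (fun k : Fin m => (⟨ub ^ gS e k.val, Subgroup.npow_mem_zpowers ub _⟩ :
          Subgroup.zpowers ub)) := by
      intro i j hijeq
      have hij' : ub ^ gS e i.val = ub ^ gS e j.val := by
        simpa [Subtype.ext_iff] using hijeq
      rcases le_total i.val j.val with h | h
      · exact Fin.ext (haux _ _ h j.isLt hij')
      · exact Fin.ext ((haux _ _ h i.isLt hij'.symm).symm)
    have hle := Nat.card_le_card_of_injective _ hinj
    rw [Nat.card_zpowers] at hle
    simpa using hle
  have le2 : orderOf ub ≤ m := by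
    have hsurj' : Function.Surjective (fun k : Fin m => ub ^ gS e k.val) := by
      intro x
      obtain ⟨k, hk⟩ := hsurj x
      exact ⟨⟨k % m, Nat.mod_lt _ hmpos⟩, (hmodm k).symm.trans hk⟩
    have hle := Nat.card_le_card_of_surjective _ hsurj'
    have hdvd := orderOf_dvd_natCard ub
    have hpos : 0 < Nat.card (Fˣ ⧸ N) := Nat.card_pos
    calc orderOf ub ≤ Nat.card (Fˣ ⧸ N) := Nat.le_of_dvd hpos hdvd
    _ ≤ m := by simpa [Nat.card_eq_fintype_card] using hle
  have horder : orderOf ub = m := le_antisymm le2 le1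
  have hmdvd : m ∣ p ^ d - 1 := by
    have hh := orderOf_dvd_of_pow_eq_one (hexpall ub)
    rwa [horder] at hh
  refine ⟨?_, ?_, ?_⟩
  · -- part (a) forward characterization
    intro hm1 g
    constructor
    · rintro ⟨hg, hg0⟩
      obtain ⟨b, hb, j, hf⟩ := stab_form hp hAGL hg hg0
      obtain ⟨k, hk⟩ := s_dvd hd hcard hs hb ⟨g, hg, hf⟩
      refine ⟨b, k, hb, fun z => ?_⟩
      rw [mul_comm k s, ← hk]
      exact hf z
    · rintro ⟨b, k, hb, hf⟩
      have hub1 : ub = 1 := orderOf_eq_one_iff.mp (by rw [horder, hm1])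
      have hNb : scalarFrob G p b 0 := by
        obtain ⟨j, hj⟩ := trans0 hp hAGL h2trans hb
        obtain ⟨k', hk'⟩ := s_dvd hd hcard hs hb hj
        have hc := coset hd hcard ha₀ hA (Units.mk0 b hb) k'
          (by rw [mul_comm k' s, ← hk']; exact hj)
        rw [← hu, ← hub, hub1, one_pow] at hc
        have hmem := (QuotientGroup.eq_one_iff _).1 hc
        exact hmem
      have hks : scalarFrob G p (1:F) (k * s) := (hK k).2 (by rw [hub1, one_pow])
      have hcomp := sf_comp hks hNb
      rw [one_pow, mul_one, add_zero] at hcomp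
      obtain ⟨g', hg', hf'⟩ := hcomp
      have hgg : g = g' := by
        apply Equiv.coe_fn_injective
        funext z
        show g z = g' z
        rw [hf z, hf' z]
      refine ⟨hgg ▸ hg', ?_⟩
      rw [hf 0, zero_pow (pow_pos hp.pos _).ne', mul_zero]
  · -- part (a) converse
    intro hall
    have hi := hall a₀⁻¹ (inv_ne_zero ha₀)
    have hcomp := sf_comp hA hi
    rw [pow_zero, pow_one, inv_mul_cancel₀ ha₀, add_zero] at hcomp
    have h1s : scalarFrob G p (1:F) (1 * s) := by rwa [one_mul]
    have := hm.2 ⟨one_pos, h1s⟩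
    omega
  · -- part (b)
    intro hm2
    have hSm : m ∣ gS e m := by
      have hh := orderOf_dvd_of_pow_eq_one h1
      rwa [horder] at hh
    have hSk : ∀ k, 0 < k → k < m → ¬ m ∣ gS e k := by
      intro k hk hkm hdvd
      refine h2 k hk hkm ?_
      apply orderOf_dvd_iff_pow_eq_one.1
      rw [horder]
      exact hdvd
    have hgeom := gS_geom e (by omega)
    set M := m * (e - 1) with hM
    have hxm : ((e : ℕ) : ZMod M) ^ m = 1 := by
      obtain ⟨t, ht⟩ := hSm
      have hEm : e ^ m = M * t + 1 := by
        rw [← hgeom m, ht, hM]; ring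
      rw [← Nat.cast_pow, hEm, Nat.cast_add, Nat.cast_mul, ZMod.natCast_self,
        zero_mul, zero_add, Nat.cast_one]
    have hord : orderOf ((e : ℕ) : ZMod M) = m := by
      rw [orderOf_eq_iff hmpos]
      refine ⟨hxm, fun k hkm hk0 hcon => ?_⟩
      have hcast : ((e ^ k : ℕ) : ZMod M) = ((1 : ℕ) : ZMod M) := by
        rw [Nat.cast_pow, hcon, Nat.cast_one]
      have hmod := (ZMod.natCast_eq_natCast_iff _ _ _).1 hcast
      have hdvd : M ∣ e ^ k - 1 :=
        (Nat.modEq_iff_dvd' (Nat.one_le_pow _ _ (by omega))).1 hmod.symm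
      have heq : e ^ k - 1 = (e - 1) * gS e k := by
        have := hgeom k; omega
      rw [heq] at hdvd
      have hmdvd' : m ∣ gS e k := by
        rcases hdvd with ⟨t, ht⟩
        have he1 : 0 < e - 1 := by omega
        refine ⟨t, Nat.eq_of_mul_eq_mul_left he1 ?_⟩
        rw [ht, hM]; ring
      exact hSk k hk0 hkm hmdvd'
    refine ⟨hord, ?_⟩
    intro r hr hrm
    by_contra hre
    haveI := Fact.mk hr
    have hrp : ¬ (r ∣ e) := by
      intro hdvd
      have hre' : r ∣ p := hr.dvd_of_dvd_pow (he ▸ hdvd)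
      have hrpeq : r = p := (Nat.prime_dvd_prime_iff_eq hr hp).1 hre'
      have hpm : p ∣ p ^ d - 1 := (hrpeq ▸ hrm).trans hmdvd
      exact (Nat.Prime.coprime_iff_not_dvd hp).1 hcop hpm
    have hx0 : ((e : ℕ) : ZMod r) ≠ 0 := by
      rw [Ne, ZMod.natCast_eq_zero_iff]
      exact hrp
    have hofin : ((e : ℕ) : ZMod r) ^ (r - 1) = 1 := ZMod.pow_card_sub_one_eq_one hx0
    set o := orderOf ((e : ℕ) : ZMod r) with ho
    have hisfin : IsOfFinOrder ((e : ℕ) : ZMod r) :=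
      isOfFinOrder_iff_pow_eq_one.2 ⟨r - 1, by have := hr.two_le; omega, hofin⟩
    have hopos : 0 < o := hisfin.orderOf_pos
    have hole : o ≤ r - 1 :=
      Nat.le_of_dvd (by have := hr.two_le; omega) (orderOf_dvd_of_pow_eq_one hofin)
    have hxo : ((e : ℕ) : ZMod r) ^ o = 1 := pow_orderOf_eq_one _
    have hcast : ((e ^ o : ℕ) : ZMod r) = ((1 : ℕ) : ZMod r) := by
      rw [Nat.cast_pow, hxo, Nat.cast_one]
    have hmodeo : e ^ o ≡ 1 [MOD r] := (ZMod.natCast_eq_natCast_iff _ _ _).1 hcast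
    have hgSo : r ∣ gS e o := by
      have hdvd : r ∣ e ^ o - 1 :=
        (Nat.modEq_iff_dvd' (Nat.one_le_pow _ _ (by omega))).1 hmodeo.symm
      have heq : e ^ o - 1 = (e - 1) * gS e o := by
        have := hgeom o; omega
      rw [heq] at hdvd
      exact (hr.dvd_mul.1 hdvd).resolve_left hre
    have hstep : ∀ k, gS e (k + o) ≡ gS e k [MOD r] := by
      intro k
      rw [gS_add e k o]
      have hh : gS e o + e ^ o * gS e k ≡ 0 + 1 * gS e k [MOD r] :=
        Nat.ModEq.add ((Nat.modEq_zero_iff_dvd).2 hgSo) (hmodeo.mul_right _)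
      simpa using hh
    have hstept : ∀ t k, gS e (k + t * o) ≡ gS e k [MOD r] := by
      intro t
      induction t with
      | zero => intro k; simpa using Nat.ModEq.refl (gS e k)
      | succ n ih =>
        intro k
        have hx : k + (n+1) * o = (k + n * o) + o := by ring
        rw [hx]
        exact (hstep _).trans (ih k)
    have hredo : ∀ k, gS e k ≡ gS e (k % o) [MOD r] := by
      intro k
      conv_lhs => rw [← Nat.mod_add_div' k o]
      exact hstept (k / o) (k % o)
    have hsurjr : Function.Surjective (fun k : Fin o => ((gS e k.val : ℕ) : ZMod r)) := by
      intro y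
      obtain ⟨k, hk⟩ := hsurj (ub ^ (y.val))
      have hmm : gS e k ≡ y.val [MOD m] := by
        have hh : gS e k ≡ y.val [MOD orderOf ub] := pow_eq_pow_modEq hk
        rwa [horder] at hh
      have hmr : gS e k ≡ y.val [MOD r] := hmm.of_dvd hrm
      refine ⟨⟨k % o, Nat.mod_lt _ hopos⟩, ?_⟩
      show ((gS e (k % o) : ℕ) : ZMod r) = y
      have hfin : gS e (k % o) ≡ y.val [MOD r] := (hredo k).symm.trans hmr
      calc ((gS e (k % o) : ℕ) : ZMod r) = ((y.val : ℕ) : ZMod r) :=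
            (ZMod.natCast_eq_natCast_iff _ _ _).2 hfin
        _ = y := ZMod.natCast_zmod_val y
    have hcardle := Fintype.card_le_of_surjective _ hsurjr
    rw [ZMod.card, Fintype.card_fin] at hcardle
    have := hr.two_le
    omega
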